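/- The selection-on-observables bias can be written in partial correlation form: τ_soo − τ = [R_{Y∼U|Z,W_Z,W_Y} · R_{Z∼U|W_Z,W_Y} / sqrt(1 − R²_{Z∼U|W_Z,W_Y})] · sd(Y^{⊥Z,W_Z,W_Y}) / sd(Z^{⊥W_Z,W_Y}). -/

import Mathlib

open Submodule RealInnerProductSpace

/-- Residual of `A` after orthogonal projection onto the span of the finite set `S`
(population linear projection residual `A^{⊥S}`). -/
noncomputable def resid {H : Type*} [NormedAddCommGroup H] [InnerProductSpace ℝ H]
    [CompleteSpace H] (A : H) (S : Set H) (hS : S.Finite) : H :=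
  haveI := hS.to_subtype
  haveI : FiniteDimensional ℝ (span ℝ S) := FiniteDimensional.span_of_finite ℝ hS
  A - (orthogonalProjection (span ℝ S) A : H)

/-- Correlation of two (mean-zero) random variables modeled as Hilbert-space vectors. -/
noncomputable def corr {H : Type*} [NormedAddCommGroup H] [InnerProductSpace ℝ H]
    (a b : H) : ℝ := ⟪a, b⟫ / (‖a‖ * ‖b‖)

set_option linter.unusedSectionVars false
section helper
variable {H : Type*} [NormedAddCommGroup H] [InnerProductSpace ℝ H] [CompleteSpace H]

lemma inner_span_zero {v : H} {s : Set H} (h : ∀ x ∈ s, ⟪v, x⟫ = 0) :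
    ∀ x ∈ span ℝ s, ⟪v, x⟫ = 0 := by
  intro x hx
  induction hx using Submodule.span_induction with
  | mem x hx => exact h x hx
  | zero => simp
  | add x y _ _ hx hy => simp [inner_add_right, hx, hy]
  | smul a x _ hx => simp [inner_smul_right, hx]

lemma resid_mem_orth (A : H) (S : Set H) (hS : S.Finite) :
    resid A S hS ∈ (span ℝ S)ᗮ := by
  haveI := hS.to_subtype
  haveI : FiniteDimensional ℝ (span ℝ S) := FiniteDimensional.span_of_finite ℝ hS
  exact sub_starProjection_mem_orthogonal A

lemma sub_resid_mem (A : H) (S : Set H) (hS : S.Finite) :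
    A - resid A S hS ∈ span ℝ S := by
  haveI := hS.to_subtype
  haveI : FiniteDimensional ℝ (span ℝ S) := FiniteDimensional.span_of_finite ℝ hS
  simpa [resid] using (orthogonalProjection (span ℝ S) A).2

lemma resid_eq_of (A r : H) (S : Set H) (hS : S.Finite)
    (hmem : A - r ∈ span ℝ S) (horth : ∀ x ∈ S, ⟪r, x⟫ = 0) :
    resid A S hS = r := by
  haveI := hS.to_subtype
  haveI : FiniteDimensional ℝ (span ℝ S) := FiniteDimensional.span_of_finite ℝ hS
  have hr : r ∈ (span ℝ S)ᗮ := by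
    rw [Submodule.mem_orthogonal]
    intro u hu
    rw [real_inner_comm]
    exact inner_span_zero horth u hu
  have hp : (orthogonalProjection (span ℝ S) A : H) = A - r :=
    eq_starProjection_of_mem_orthogonal (K := span ℝ S) (u := A) hmem
    (by simpa [sub_sub_cancel] using hr)
  simp only [resid, hp]
  abel

lemma resid_inner_zero (A : H) {S : Set H} (hS : S.Finite) {x : H} (hx : x ∈ S) :
    ⟪resid A S hS, x⟫ = 0 := by
  have h := (Submodule.mem_orthogonal _ _).mp (resid_mem_orth A S hS)
  rw [real_inner_comm]
  exact h x (subset_span hx)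

end helper

set_option maxHeartbeats 1000000 in
/-- Lemma A.2 (Cinelli–Hazlett formula): the selection-on-observables bias in partial
correlation form,
`τ_soo − τ = [R_{Y∼U|Z,W_Z,W_Y} · R_{Z∼U|W_Z,W_Y} / √(1 − R²_{Z∼U|W_Z,W_Y})]
  · sd(Y^{⊥Z,W_Z,W_Y}) / sd(Z^{⊥W_Z,W_Y})`,
where `τ_soo` (= `t1`) is the coefficient on `Z` in the population regression of `Y` on
`(Z, W_Z, W_Y)` and `τ` (= `t2`) is the coefficient on `Z` in the population regression
of `Y` on `(Z, W_Z, W_Y, U)`, both characterized by the normal equations. -/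
theorem stmt_8 {H : Type*} [NormedAddCommGroup H] [InnerProductSpace ℝ H] [CompleteSpace H]
    (Y Z U WZ WY : H)
    (hli : LinearIndependent ℝ ![Z, WZ, WY, U])
    (hvZ : resid Z {WZ, WY} (Set.toFinite _) ≠ 0)
    (hvU1 : resid U {WZ, WY} (Set.toFinite _) ≠ 0)
    (hvY : resid Y {Z, WZ, WY} (Set.toFinite _) ≠ 0)
    (hvU2 : resid U {Z, WZ, WY} (Set.toFinite _) ≠ 0)
    (hR2 : (corr (resid Z {WZ, WY} (Set.toFinite _)) (resid U {WZ, WY} (Set.toFinite _)))^2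
            < 1) :
    ∀ t1 a1 b1 t2 a2 b2 d2 : ℝ,
      (⟪Y - (t1 • Z + a1 • WZ + b1 • WY), Z⟫ = 0) →
      (⟪Y - (t1 • Z + a1 • WZ + b1 • WY), WZ⟫ = 0) →
      (⟪Y - (t1 • Z + a1 • WZ + b1 • WY), WY⟫ = 0) →
      (⟪Y - (t2 • Z + a2 • WZ + b2 • WY + d2 • U), Z⟫ = 0) →
      (⟪Y - (t2 • Z + a2 • WZ + b2 • WY + d2 • U), WZ⟫ = 0) →
      (⟪Y - (t2 • Z + a2 • WZ + b2 • WY + d2 • U), WY⟫ = 0) →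
      (⟪Y - (t2 • Z + a2 • WZ + b2 • WY + d2 • U), U⟫ = 0) →
      t1 - t2 =
        (corr (resid Y {Z, WZ, WY} (Set.toFinite _)) (resid U {Z, WZ, WY} (Set.toFinite _)) *
         corr (resid Z {WZ, WY} (Set.toFinite _)) (resid U {WZ, WY} (Set.toFinite _)) /
         Real.sqrt (1 -
           (corr (resid Z {WZ, WY} (Set.toFinite _))
             (resid U {WZ, WY} (Set.toFinite _)))^2)) *
        (‖resid Y {Z, WZ, WY} (Set.toFinite _)‖ / ‖resid Z {WZ, WY} (Set.toFinite _)‖) := by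
  intro t1 a1 b1 t2 a2 b2 d2 h1Z h1WZ h1WY h2Z h2WZ h2WY h2U
  set z := resid Z {WZ, WY} (Set.toFinite _) with hzdef
  set u1 := resid U {WZ, WY} (Set.toFinite _) with hu1def
  set y := resid Y {Z, WZ, WY} (Set.toFinite _) with hydef
  set u2 := resid U {Z, WZ, WY} (Set.toFinite _) with hu2def
  have hnz : ‖z‖ ≠ 0 := norm_ne_zero_iff.mpr hvZ
  have hnu1 : ‖u1‖ ≠ 0 := norm_ne_zero_iff.mpr hvU1
  have hny : ‖y‖ ≠ 0 := norm_ne_zero_iff.mpr hvY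
  have hnu2 : ‖u2‖ ≠ 0 := norm_ne_zero_iff.mpr hvU2
  have hsub : ({WZ, WY} : Set H) ⊆ {Z, WZ, WY} := by
    intro x hx; simp only [Set.mem_insert_iff, Set.mem_singleton_iff] at hx ⊢; tauto
  have hsub2 : ({Z, WZ, WY} : Set H) ⊆ {Z, WZ, WY, U} := by
    intro x hx; simp only [Set.mem_insert_iff, Set.mem_singleton_iff] at hx ⊢; tauto
  -- orthogonality of residuals to their spans
  have hz_orth : ∀ x ∈ span ℝ ({WZ, WY} : Set H), ⟪x, z⟫ = 0 :=
    (Submodule.mem_orthogonal _ _).mp (resid_mem_orth Z {WZ, WY} (Set.toFinite _))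
  have hu1_orth : ∀ x ∈ span ℝ ({WZ, WY} : Set H), ⟪x, u1⟫ = 0 :=
    (Submodule.mem_orthogonal _ _).mp (resid_mem_orth U {WZ, WY} (Set.toFinite _))
  have hu2_orth : ∀ x ∈ span ℝ ({Z, WZ, WY} : Set H), ⟪x, u2⟫ = 0 :=
    (Submodule.mem_orthogonal _ _).mp (resid_mem_orth U {Z, WZ, WY} (Set.toFinite _))
  -- basic inner product facts
  have hWZz : ⟪WZ, z⟫ = 0 := hz_orth WZ (subset_span (by simp))
  have hWYz : ⟪WY, z⟫ = 0 := hz_orth WY (subset_span (by simp))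
  have hZu2 : ⟪Z, u2⟫ = 0 := hu2_orth Z (subset_span (by simp))
  have hWZu2 : ⟪WZ, u2⟫ = 0 := hu2_orth WZ (subset_span (by simp))
  have hWYu2 : ⟪WY, u2⟫ = 0 := hu2_orth WY (subset_span (by simp))
  have hZz : ⟪Z, z⟫ = ‖z‖ ^ 2 := by
    have h0 : ⟪Z - z, z⟫ = 0 := hz_orth _ (sub_resid_mem Z {WZ, WY} (Set.toFinite _))
    rw [inner_sub_left] at h0
    have := real_inner_self_eq_norm_sq z
    linarith
  have hUz : ⟪U, z⟫ = ⟪u1, z⟫ := by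
    have h0 : ⟪U - u1, z⟫ = 0 := hz_orth _ (sub_resid_mem U {WZ, WY} (Set.toFinite _))
    rw [inner_sub_left] at h0
    linarith
  have hUu2 : ⟪U, u2⟫ = ‖u2‖ ^ 2 := by
    have h0 : ⟪U - u2, u2⟫ = 0 := hu2_orth _ (sub_resid_mem U {Z, WZ, WY} (Set.toFinite _))
    rw [inner_sub_left] at h0
    have := real_inner_self_eq_norm_sq u2
    linarith
  have hYu2 : ⟪Y, u2⟫ = ⟪y, u2⟫ := by
    have h0 : ⟪Y - y, u2⟫ = 0 := hu2_orth _ (sub_resid_mem Y {Z, WZ, WY} (Set.toFinite _))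
    rw [inner_sub_left] at h0
    linarith
  have hZzmem : Z - z ∈ span ℝ ({WZ, WY} : Set H) := sub_resid_mem Z {WZ, WY} (Set.toFinite _)
  have hzmem : z ∈ span ℝ ({Z, WZ, WY} : Set H) := by
    have h1 : Z - z ∈ span ℝ ({Z, WZ, WY} : Set H) := span_mono hsub hZzmem
    have h2 : Z ∈ span ℝ ({Z, WZ, WY} : Set H) := subset_span (by simp)
    have h3 : z = Z - (Z - z) := by abel
    rw [h3]; exact Submodule.sub_mem _ h2 h1
  have hu2mem : u2 ∈ span ℝ ({Z, WZ, WY, U} : Set H) := by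
    have h1 : U - u2 ∈ span ℝ ({Z, WZ, WY, U} : Set H) :=
      span_mono hsub2 (sub_resid_mem U {Z, WZ, WY} (Set.toFinite _))
    have h2 : U ∈ span ℝ ({Z, WZ, WY, U} : Set H) := subset_span (by simp)
    have h3 : u2 = U - (U - u2) := by abel
    rw [h3]; exact Submodule.sub_mem _ h2 h1
  -- normal equations applied to residuals
  have he1z : ⟪Y - (t1 • Z + a1 • WZ + b1 • WY), z⟫ = 0 := by
    refine inner_span_zero ?_ z hzmem
    intro x hx
    simp only [Set.mem_insert_iff, Set.mem_singleton_iff] at hx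
    rcases hx with rfl | rfl | rfl <;> assumption
  have he2z : ⟪Y - (t2 • Z + a2 • WZ + b2 • WY + d2 • U), z⟫ = 0 := by
    refine inner_span_zero ?_ z (span_mono hsub2 hzmem)
    intro x hx
    simp only [Set.mem_insert_iff, Set.mem_singleton_iff] at hx
    rcases hx with rfl | rfl | rfl | rfl <;> assumption
  have he2u2 : ⟪Y - (t2 • Z + a2 • WZ + b2 • WY + d2 • U), u2⟫ = 0 := by
    refine inner_span_zero ?_ u2 hu2mem
    intro x hx
    simp only [Set.mem_insert_iff, Set.mem_singleton_iff] at hx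
    rcases hx with rfl | rfl | rfl | rfl <;> assumption
  have E1 : (t1 - t2) * ‖z‖ ^ 2 = d2 * ⟪u1, z⟫ := by
    rw [inner_sub_left, inner_add_left, inner_add_left, real_inner_smul_left,
      real_inner_smul_left, real_inner_smul_left, hZz, hWZz, hWYz] at he1z
    rw [inner_sub_left, inner_add_left, inner_add_left, inner_add_left, real_inner_smul_left,
      real_inner_smul_left, real_inner_smul_left, real_inner_smul_left,
      hZz, hWZz, hWYz, hUz] at he2z
    nlinarith [he1z, he2z]
  have E2 : ⟪y, u2⟫ = d2 * ‖u2‖ ^ 2 := by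
    rw [inner_sub_left, inner_add_left, inner_add_left, inner_add_left, real_inner_smul_left,
      real_inner_smul_left, real_inner_smul_left, real_inner_smul_left,
      hZu2, hWZu2, hWYu2, hUu2, hYu2] at he2u2
    linarith
  -- the iterated-projection identity
  have E3 : u2 = u1 - (⟪u1, z⟫ / ‖z‖ ^ 2) • z := by
    rw [hu2def]
    apply resid_eq_of
    · have h3 : U - (u1 - (⟪u1, z⟫ / ‖z‖ ^ 2) • z) = (U - u1) + (⟪u1, z⟫ / ‖z‖ ^ 2) • z := by
        abel
      rw [h3]
      exact Submodule.add_mem _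
        (span_mono hsub (sub_resid_mem U {WZ, WY} (Set.toFinite _)))
        (Submodule.smul_mem _ _ hzmem)
    · intro x hx
      simp only [Set.mem_insert_iff, Set.mem_singleton_iff] at hx
      rcases hx with hx | hx | hx <;> rw [hx]
      · have h1 : ⟪Z - z, u1⟫ = 0 := hu1_orth _ hZzmem
        rw [inner_sub_left] at h1
        rw [inner_sub_left, real_inner_smul_left, real_inner_comm Z u1, real_inner_comm Z z,
          hZz]
        have h2 : ⟪Z, u1⟫ = ⟪z, u1⟫ := by linarith
        rw [h2, real_inner_comm u1 z]
        field_simp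
        ring
      · have h1 : ⟪WZ, u1⟫ = 0 := hu1_orth WZ (subset_span (by simp))
        have h2 : ⟪WZ, z⟫ = 0 := hWZz
        rw [inner_sub_left, real_inner_smul_left, real_inner_comm WZ u1, real_inner_comm WZ z,
          h1, h2]
        ring
      · have h1 : ⟪WY, u1⟫ = 0 := hu1_orth WY (subset_span (by simp))
        rw [inner_sub_left, real_inner_smul_left, real_inner_comm WY u1, real_inner_comm WY z,
          h1, hWYz]
        ring
  clear_value z u1 y u2
  have E4 : ‖u2‖ ^ 2 * ‖z‖ ^ 2 = ‖u1‖ ^ 2 * ‖z‖ ^ 2 - ⟪u1, z⟫ ^ 2 := by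
    rw [E3, @norm_sub_sq_real, real_inner_smul_right, norm_smul, mul_pow, Real.norm_eq_abs, sq_abs]
    field_simp
    ring
  have hsq : Real.sqrt (1 - (corr z u1) ^ 2) = ‖u2‖ / ‖u1‖ := by
    have h : 1 - (corr z u1) ^ 2 = (‖u2‖ / ‖u1‖) ^ 2 := by
      have hc : corr z u1 = ⟪u1, z⟫ / (‖z‖ * ‖u1‖) := by
        rw [corr, real_inner_comm]
      rw [hc]
      field_simp
      linear_combination (-1) * E4
    rw [h, Real.sqrt_sq (by positivity)]
  rw [hsq]
  have hcy : corr y u2 = d2 * ‖u2‖ ^ 2 / (‖y‖ * ‖u2‖) := by rw [corr, E2]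
  have hcz : corr z u1 = ⟪u1, z⟫ / (‖z‖ * ‖u1‖) := by rw [corr, real_inner_comm]
  rw [hcy, hcz]
  have E1' : t1 - t2 = d2 * ⟪u1, z⟫ / ‖z‖ ^ 2 := by
    field_simp
    linear_combination E1
  rw [E1']
  field_simp
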